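/- A symmetric n-additive function F : G^n → H between abelian groups is uniquely determined by its trace: if two symmetric n-additive functions F₁, F₂ have equal traces (F₁(x,…,x) = F₂(x,…,x) for all x ∈ G, and H is uniquely divisible by n!), then F₁ = F₂. -/

import Mathlib

private theorem addAux {G H : Type*} [AddCommGroup G] [AddCommGroup H] {n : ℕ}
    (F : (Fin n → G) → H)
    (hadd : ∀ (i : Fin n) (v : Fin n → G) (y : G),
      F (Function.update v i (v i + y)) = F v + F (Function.update v i y))
    (v : Fin n → G) (i : Fin n) (x y : G) :
    F (Function.update v i (x + y)) = F (Function.update v i x) + F (Function.update v i y) := by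
  have h := hadd i (Function.update v i x) y
  rwa [Function.update_self, Function.update_idem, Function.update_idem] at h

private def toML {G H : Type*} [AddCommGroup G] [AddCommGroup H] {n : ℕ}
    (F : (Fin n → G) → H)
    (hadd : ∀ (i : Fin n) (v : Fin n → G) (y : G),
      F (Function.update v i (v i + y)) = F v + F (Function.update v i y)) :
    MultilinearMap ℤ (fun _ : Fin n => G) H where
  toFun := F
  map_update_add' := by
    intro inst v i x y
    rw [Subsingleton.elim inst (instDecidableEqFin n)]
    exact addAux F hadd v i x y
  map_update_smul' := by
    intro inst v i c x
    rw [Subsingleton.elim inst (instDecidableEqFin n)]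
    clear inst
    exact map_zsmul (AddMonoidHom.mk' (fun x => F (Function.update v i x))
      (fun a b => by simpa using addAux F hadd v i a b)) c x

open Finset

private theorem key {G H : Type*} [AddCommGroup G] [AddCommGroup H] {n : ℕ}
    (hdiv : Function.Injective (fun h : H => n.factorial • h))
    (D : MultilinearMap ℤ (fun _ : Fin n => G) H)
    (hsym : ∀ (σ : Equiv.Perm (Fin n)) (v : Fin n → G), D (v ∘ σ) = D v)
    (htr : ∀ x : G, D (fun _ => x) = 0) (v : Fin n → G) : D v = 0 := by
  classical
  have h0 : (∑ T : Finset (Fin n), ∑ f : Fin n → Fin n,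
      if (∀ i, f i ∈ T) then ((-1 : ℤ) ^ (#Tᶜ)) • D (fun i => v (f i)) else 0) = 0 := by
    have key0 : ∀ T : Finset (Fin n),
        (∑ f : Fin n → Fin n,
          if (∀ i, f i ∈ T) then ((-1 : ℤ) ^ (#Tᶜ)) • D (fun i => v (f i)) else 0)
        = ((-1 : ℤ) ^ (#Tᶜ)) • D (fun _ => ∑ i ∈ T, v i) := by
      intro T
      rw [D.map_sum_finset (fun _ j => v j) (fun _ => T), Finset.smul_sum]
      rw [← Finset.sum_filter]
      apply Finset.sum_congr
      · ext f; simp [Fintype.mem_piFinset]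
      · intros; rfl
    rw [Finset.sum_congr rfl (fun T _ => key0 T)]
    simp [htr]
  rw [Finset.sum_comm] at h0
  have h1 : ∀ f : Fin n → Fin n,
      (∑ T : Finset (Fin n),
        if (∀ i, f i ∈ T) then ((-1 : ℤ) ^ (#Tᶜ)) • D (fun i => v (f i)) else 0)
      = (if Finset.image f Finset.univ = Finset.univ then (1:ℤ) else 0)
          • D (fun i => v (f i)) := by
    intro f
    have hsplit : ∀ T : Finset (Fin n),
        (if (∀ i, f i ∈ T) then ((-1 : ℤ) ^ (#Tᶜ)) • D (fun i => v (f i)) else 0)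
        = (if (∀ i, f i ∈ T) then ((-1 : ℤ) ^ (#Tᶜ)) else 0) • D (fun i => v (f i)) := by
      intro T; split <;> simp
    rw [Finset.sum_congr rfl (fun T _ => hsplit T), ← Finset.sum_smul]
    congr 1
    rw [← Finset.sum_filter]
    have himg : Finset.univ.filter (fun T : Finset (Fin n) => ∀ i, f i ∈ T)
        = Finset.univ.filter (fun T => Finset.image f Finset.univ ⊆ T) := by
      apply Finset.filter_congr; intro T _; simp [Finset.image_subset_iff]
    rw [himg]
    have hc : (∑ T ∈ Finset.univ.filter (fun T : Finset (Fin n) =>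
          Finset.image f Finset.univ ⊆ T), (-1:ℤ)^(#Tᶜ))
        = ∑ U ∈ (Finset.image f Finset.univ)ᶜ.powerset, (-1:ℤ)^(#U) := by
      apply Finset.sum_nbij' (i := fun T => Tᶜ) (j := fun U => Uᶜ)
      · intro T hT; simp only [Finset.mem_filter, Finset.mem_univ, true_and] at hT
        simpa [Finset.mem_powerset] using Finset.compl_subset_compl.2 hT
      · intro U hU; simp only [Finset.mem_powerset] at hU
        simp only [Finset.mem_filter, Finset.mem_univ, true_and]
        exact Finset.subset_compl_comm.1 hU
      · intro T _; simp
      · intro U _; simp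
      · intro T _; rfl
    rw [hc, Finset.sum_powerset_neg_one_pow_card]
    simp [Finset.compl_eq_empty_iff]
  rw [Finset.sum_congr rfl (fun f _ => h1 f)] at h0
  -- only surjective f survive
  have h2 : (∑ f ∈ Finset.univ.filter
      (fun f : Fin n → Fin n => Finset.image f Finset.univ = Finset.univ),
      D (fun i => v (f i))) = 0 := by
    rw [← h0]
    rw [Finset.sum_filter]
    apply Finset.sum_congr rfl
    intro f _
    split <;> simp_all
  -- identify with sum over permutations
  have hsurj : ∀ f ∈ Finset.univ.filter
      (fun f : Fin n → Fin n => Finset.image f Finset.univ = Finset.univ),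
      Function.Bijective f := by
    intro f hf
    simp only [Finset.mem_filter] at hf
    refine Finite.surjective_iff_bijective.1 (fun y => ?_)
    have : y ∈ Finset.image f Finset.univ := by rw [hf.2]; exact Finset.mem_univ y
    simpa using this
  have h3 : (∑ f ∈ Finset.univ.filter
        (fun f : Fin n → Fin n => Finset.image f Finset.univ = Finset.univ),
        D (fun i => v (f i)))
      = ∑ σ : Equiv.Perm (Fin n), D (fun i => v (σ i)) := by
    refine Finset.sum_bij' (i := fun f hf => Equiv.ofBijective f (hsurj f hf))
      (j := fun σ _ => ⇑σ) (hi := fun f hf => Finset.mem_univ _)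
      (hj := ?_) (left_neg := fun f hf => rfl)
      (right_neg := fun σ _ => Equiv.ext (fun x => rfl)) (h := fun f hf => rfl)
    intro σ _
    simp only [Finset.mem_filter, Finset.mem_univ, true_and]
    ext y; simp [σ.surjective y]
  have h4 : (∑ σ : Equiv.Perm (Fin n), D (fun i => v (σ i))) = n.factorial • D v := by
    have : ∀ σ : Equiv.Perm (Fin n), D (fun i => v (σ i)) = D v := fun σ => hsym σ v
    rw [Finset.sum_congr rfl (fun σ _ => this σ), Finset.sum_const, Finset.card_univ,
      Fintype.card_perm, Fintype.card_fin]
  have h5 : n.factorial • D v = 0 := by rw [← h4, ← h3, h2]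
  apply hdiv
  show n.factorial • D v = n.factorial • (0:H)
  simpa using h5

theorem stmt_7 {G H : Type*} [AddCommGroup G] [AddCommGroup H] (n : ℕ)
    (hdiv : Function.Bijective (fun h : H => n.factorial • h))
    (F₁ F₂ : (Fin n → G) → H)
    (haddF₁ : ∀ (i : Fin n) (v : Fin n → G) (y : G),
      F₁ (Function.update v i (v i + y)) = F₁ v + F₁ (Function.update v i y))
    (hsym₁ : ∀ (σ : Equiv.Perm (Fin n)) (v : Fin n → G), F₁ (v ∘ σ) = F₁ v)
    (haddF₂ : ∀ (i : Fin n) (v : Fin n → G) (y : G),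
      F₂ (Function.update v i (v i + y)) = F₂ v + F₂ (Function.update v i y))
    (hsym₂ : ∀ (σ : Equiv.Perm (Fin n)) (v : Fin n → G), F₂ (v ∘ σ) = F₂ v)
    (htr : ∀ x : G, F₁ (fun _ => x) = F₂ (fun _ => x)) :
    F₁ = F₂ := by
  have hD := key hdiv.injective (toML F₁ haddF₁ - toML F₂ haddF₂)
    (fun σ v => by
      show F₁ (v ∘ σ) - F₂ (v ∘ σ) = F₁ v - F₂ v
      rw [hsym₁ σ v, hsym₂ σ v])
    (fun x => by
      show F₁ (fun _ => x) - F₂ (fun _ => x) = 0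
      rw [htr x, sub_self])
  funext v
  have h := hD v
  have h' : F₁ v - F₂ v = 0 := h
  exact sub_eq_zero.1 h'
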